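/- The map x ↦ 1 − (2/Γ(Q))(c x)^(Q/2) K_Q(2√(c x)) for x > 0, c > 0, Q a positive integer, is a strictly increasing function with limit 0 as x → 0⁺ and limit 1 as x → ∞; i.e., it is a valid continuous CDF on (0,∞). -/

import Mathlib

open MeasureTheory Real Set Filter Topology

/-- The modified Bessel function of the second kind `K_ν(x)`. -/
noncomputable def besselK (ν x : ℝ) : ℝ :=
  ∫ t in Set.Ioi (0 : ℝ), Real.exp (-x * Real.cosh t) * Real.cosh (ν * t)

noncomputable def Gaux (Q : ℕ) (y : ℝ) : ℝ :=
  ∫ t in Set.Ioi (0:ℝ), Real.exp (-t - y/t) * t ^ (Q - 1)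

lemma gamma_integrand_eq (Q : ℕ) (hQ : 1 ≤ Q) {t : ℝ} (ht : 0 < t) :
    t ^ ((Q:ℝ) - 1) = t ^ (Q - 1) := by
  rw [show ((Q:ℝ) - 1) = ((Q - 1 : ℕ) : ℝ) by push_cast [hQ]; ring,
    Real.rpow_natCast]

lemma gamma_int (Q : ℕ) (hQ : 1 ≤ Q) :
    IntegrableOn (fun t : ℝ => Real.exp (-t) * t ^ (Q - 1)) (Ioi 0) := by
  have h := Real.GammaIntegral_convergent (s := (Q:ℝ)) (by positivity)
  exact h.congr_fun (fun t ht => by dsimp only; rw [gamma_integrand_eq Q hQ ht]) measurableSet_Ioi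

lemma Gaux_meas (Q : ℕ) (y : ℝ) :
    AEStronglyMeasurable (fun t : ℝ => Real.exp (-t - y/t) * t ^ (Q - 1))
      (volume.restrict (Ioi 0)) := by
  apply Measurable.aestronglyMeasurable
  fun_prop

lemma Gaux_int (Q : ℕ) (hQ : 1 ≤ Q) {y : ℝ} (hy : 0 ≤ y) :
    IntegrableOn (fun t : ℝ => Real.exp (-t - y/t) * t ^ (Q - 1)) (Ioi 0) := by
  refine (gamma_int Q hQ).mono' (Gaux_meas Q y) ?_
  filter_upwards [ae_restrict_mem measurableSet_Ioi] with t ht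
  rw [Real.norm_eq_abs, abs_mul, abs_of_nonneg (Real.exp_nonneg _),
    abs_of_nonneg (pow_nonneg (le_of_lt ht) _)]
  have : -t - y/t ≤ -t := by
    have : 0 ≤ y / t := div_nonneg hy (le_of_lt ht)
    linarith
  exact mul_le_mul_of_nonneg_right (Real.exp_le_exp.2 this) (pow_nonneg (le_of_lt ht) _)

lemma Gaux_zero (Q : ℕ) (hQ : 1 ≤ Q) : Gaux Q 0 = Real.Gamma Q := by
  rw [Real.Gamma_eq_integral (by positivity), Gaux]
  refine setIntegral_congr_fun measurableSet_Ioi (fun t ht => ?_)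
  rw [gamma_integrand_eq Q hQ ht]
  simp

lemma Gaux_anti (Q : ℕ) (hQ : 1 ≤ Q) : ∀ ⦃y₁ : ℝ⦄, 0 ≤ y₁ → ∀ ⦃y₂ : ℝ⦄, y₁ < y₂ →
    Gaux Q y₂ < Gaux Q y₁ := by
  intro y₁ hy₁ y₂ hy
  have h₁ := Gaux_int Q hQ hy₁
  have h₂ := Gaux_int Q hQ (le_trans hy₁ hy.le)
  have hpos : ∀ t ∈ Ioi (0:ℝ),
      0 < Real.exp (-t - y₁/t) * t ^ (Q - 1) - Real.exp (-t - y₂/t) * t ^ (Q - 1) := by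
    intro t ht
    have htp : (0:ℝ) < t := ht
    have hlt : Real.exp (-t - y₂/t) < Real.exp (-t - y₁/t) := by
      apply Real.exp_lt_exp.2
      have : y₁ / t < y₂ / t := div_lt_div_of_pos_right hy htp
      linarith
    exact sub_pos.2 (mul_lt_mul_of_pos_right hlt (pow_pos htp _))
  rw [← sub_pos, Gaux, Gaux, ← integral_sub h₁ h₂]
  refine (setIntegral_pos_iff_support_of_nonneg_ae ?_ (h₁.sub h₂)).2 ?_
  · filter_upwards [ae_restrict_mem measurableSet_Ioi] with t ht using (hpos t ht).le
  · refine lt_of_lt_of_le ?_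
      (measure_mono (subset_inter (fun t ht => (hpos t ht).ne') subset_rfl))
    simp [Real.volume_Ioi]

lemma Gaux_cont (Q : ℕ) (hQ : 1 ≤ Q) : ContinuousOn (Gaux Q) (Ici 0) := by
  refine continuousOn_of_dominated (fun y _ => Gaux_meas Q y)
    (fun y hy => ?_) (gamma_int Q hQ) ?_
  · filter_upwards [ae_restrict_mem measurableSet_Ioi] with t ht
    rw [Real.norm_eq_abs, abs_mul, abs_of_nonneg (Real.exp_nonneg _),
      abs_of_nonneg (pow_nonneg (le_of_lt ht) _)]
    have h0 : 0 ≤ y / t := div_nonneg hy (le_of_lt ht)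
    exact mul_le_mul_of_nonneg_right (Real.exp_le_exp.2 (by linarith))
      (pow_nonneg (le_of_lt ht) _)
  · filter_upwards [ae_restrict_mem measurableSet_Ioi] with t ht
    exact ((Real.continuous_exp.comp (by fun_prop)).mul continuous_const).continuousOn

lemma Gaux_tendsto_top (Q : ℕ) (hQ : 1 ≤ Q) : Tendsto (Gaux Q) atTop (nhds 0) := by
  have : Tendsto (Gaux Q) atTop (nhds (∫ t in Ioi (0:ℝ), (0:ℝ))) := by
    refine tendsto_integral_filter_of_dominated_convergence
      (fun t => Real.exp (-t) * t ^ (Q - 1))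
      (Filter.Eventually.of_forall (fun y => Gaux_meas Q y)) ?_ (gamma_int Q hQ) ?_
    · filter_upwards [eventually_ge_atTop (0:ℝ)] with y hy
      filter_upwards [ae_restrict_mem measurableSet_Ioi] with t ht
      rw [Real.norm_eq_abs, abs_mul, abs_of_nonneg (Real.exp_nonneg _),
        abs_of_nonneg (pow_nonneg (le_of_lt ht) _)]
      have h0 : 0 ≤ y / t := div_nonneg hy (le_of_lt ht)
      exact mul_le_mul_of_nonneg_right (Real.exp_le_exp.2 (by linarith))
        (pow_nonneg (le_of_lt ht) _)
    · filter_upwards [ae_restrict_mem measurableSet_Ioi] with t ht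
      have h1 : Tendsto (fun y : ℝ => -t - y / t) atTop atBot := by
        apply tendsto_atBot_add_const_left
        exact (tendsto_neg_atBot_iff.2 (tendsto_id.atTop_div_const ht))
      have := (Real.tendsto_exp_atBot.comp h1).mul_const ((t:ℝ) ^ (Q-1))
      simpa using this
  simpa using this

lemma scaled_gamma_int (Q : ℕ) (hQ : 1 ≤ Q) {a : ℝ} (ha : 0 < a) :
    IntegrableOn (fun s : ℝ => Real.exp (-(a*s)) * s ^ (Q - 1)) (Ioi 0) := by
  have h : IntegrableOn (fun x : ℝ => Real.exp (-x) * x ^ (Q - 1)) (Ioi (a * 0)) := by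
    rw [mul_zero]
    have h := Real.GammaIntegral_convergent (s := (Q:ℝ)) (by exact_mod_cast Nat.cast_pos.2 hQ)
    refine h.congr_fun (fun t ht => ?_) measurableSet_Ioi
    dsimp only
    rw [show ((Q:ℝ) - 1) = ((Q - 1 : ℕ) : ℝ) by push_cast [hQ]; ring, Real.rpow_natCast]
  have h2 := (integrableOn_Ioi_comp_mul_left_iff
    (fun x : ℝ => Real.exp (-x) * x ^ (Q - 1)) 0 ha).2 h
  have h3 : IntegrableOn (fun s : ℝ => ((a:ℝ) ^ (Q-1))⁻¹ * (Real.exp (-(a*s)) * (a*s) ^ (Q - 1))) (Ioi 0) :=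
    h2.const_mul ((a:ℝ) ^ (Q-1))⁻¹
  refine h3.congr_fun (fun s hs => ?_) measurableSet_Ioi
  have hs0 : (0:ℝ) < s := hs
  field_simp [mul_pow]
  ring

lemma besselK_key (Q : ℕ) (hQ : 1 ≤ Q) {z : ℝ} (hz : 0 < z) :
    (z/2)^Q * besselK Q z = Gaux Q (z^2/4) / 2 := by
  set e1 : ℝ → ℝ := fun s => Real.exp (-(z/2) * (s + s⁻¹)) * s ^ (Q - 1) with he1
  set e2 : ℝ → ℝ := fun s => Real.exp (-(z/2) * (s + s⁻¹)) * (s⁻¹) ^ (Q + 1) with he2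
  have hz2 : (0:ℝ) < z/2 := by linarith
  -- integrability of e1 on Ioi 0
  have hint1 : IntegrableOn e1 (Ioi 0) := by
    refine (scaled_gamma_int Q hQ hz2).mono' ?_ ?_
    · exact (Measurable.aestronglyMeasurable (by fun_prop))
    · filter_upwards [ae_restrict_mem measurableSet_Ioi] with s hs
      have hs0 : (0:ℝ) < s := hs
      rw [Real.norm_eq_abs, he1, abs_mul, abs_of_nonneg (Real.exp_nonneg _),
        abs_of_nonneg (pow_nonneg hs0.le _)]
      refine mul_le_mul_of_nonneg_right (Real.exp_le_exp.2 ?_) (pow_nonneg hs0.le _)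
      have h1 : 0 ≤ (z/2) * s⁻¹ := by positivity
      nlinarith
  -- image facts
  have himg : Real.exp '' (Ici 0) = Ici 1 := by
    ext s
    constructor
    · rintro ⟨u, hu, rfl⟩; exact Real.one_le_exp hu
    · intro hs
      exact ⟨Real.log s, Real.log_nonneg hs, Real.exp_log (lt_of_lt_of_le one_pos hs)⟩
  have himg2 : Inv.inv '' (Ici (1:ℝ)) = Ioc 0 1 := by
    ext s
    constructor
    · rintro ⟨r, hr, rfl⟩
      have hr0 : (0:ℝ) < r := lt_of_lt_of_le one_pos hr
      exact ⟨inv_pos.2 hr0, inv_le_one_of_one_le₀ hr⟩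
    · rintro ⟨hs0, hs1⟩
      exact ⟨s⁻¹, one_le_inv_iff₀.2 ⟨hs0, hs1⟩, inv_inv s⟩
  -- step B : inversion
  have hB : ∀ r ∈ Ici (1:ℝ), |(-(r^2)⁻¹)| • e1 r⁻¹ = e2 r := by
    intro r hr
    have hr0 : (0:ℝ) < r := lt_of_lt_of_le one_pos hr
    have habs : |(-(r^2)⁻¹)| = (r^2)⁻¹ := by
      rw [abs_neg, abs_of_nonneg (by positivity)]
    rw [smul_eq_mul, habs, he1, he2]
    simp only [inv_inv]
    have harg : -(z/2) * (r⁻¹ + r) = -(z/2) * (r + r⁻¹) := by ring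
    rw [harg]
    have hpow : (r^2)⁻¹ * (r⁻¹) ^ (Q-1) = (r⁻¹) ^ (Q+1) := by
      rw [← inv_pow, ← pow_add]
      congr 1
      omega
    rw [mul_left_comm, hpow]
  -- integrability of e2 on Ici 1
  have hint2 : IntegrableOn e2 (Ici 1) := by
    have h1 : IntegrableOn e1 (Inv.inv '' Ici (1:ℝ)) := by
      rw [himg2]; exact hint1.mono_set (fun x hx => hx.1)
    have h2 := (integrableOn_image_iff_integrableOn_abs_deriv_smul measurableSet_Ici
      (fun r hr => (hasDerivAt_inv (ne_of_gt (lt_of_lt_of_le one_pos hr))).hasDerivWithinAt)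
      (inv_injective.injOn) e1).1 h1
    exact h2.congr_fun (fun r hr => hB r hr) measurableSet_Ici
  -- step B integral identity
  have hBint : ∫ s in Ioc (0:ℝ) 1, e1 s = ∫ r in Ici (1:ℝ), e2 r := by
    rw [← himg2, integral_image_eq_integral_abs_deriv_smul measurableSet_Ici
      (fun r hr => (hasDerivAt_inv (ne_of_gt (lt_of_lt_of_le one_pos hr))).hasDerivWithinAt)
      (inv_injective.injOn) e1]
    exact setIntegral_congr_fun measurableSet_Ici hB
  -- step A : besselK as integral over Ici 1
  have hA : besselK Q z = ∫ s in Ici (1:ℝ), (e1 s + e2 s)/2 := by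
    rw [besselK, ← integral_Ici_eq_integral_Ioi, ← himg,
      integral_image_eq_integral_abs_deriv_smul measurableSet_Ici
      (fun u _ => (Real.hasDerivAt_exp u).hasDerivWithinAt)
      (Real.exp_injective.injOn) (fun s => (e1 s + e2 s)/2)]
    refine setIntegral_congr_fun measurableSet_Ici (fun u _ => ?_)
    rw [smul_eq_mul, abs_of_nonneg (Real.exp_nonneg u), he1, he2]
    simp only
    rw [← Real.exp_neg]
    have harg : -(z/2) * (Real.exp u + Real.exp (-u)) = -z * Real.cosh u := by
      rw [Real.cosh_eq]; ring
    rw [harg, Real.cosh_eq (Q * u)]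
    have hq1 : Real.exp u * Real.exp u ^ (Q-1) = Real.exp (Q * u) := by
      rw [Real.exp_nat_mul, ← pow_succ']
      congr 1
      omega
    have hq2 : Real.exp u * Real.exp (-u) ^ (Q+1) = Real.exp (-(Q * u)) := by
      rw [← Real.exp_nat_mul, ← Real.exp_add]
      congr 1
      push_cast
      ring
    linear_combination (-(Real.exp (-z * Real.cosh u))/2) * hq1 +
      (-(Real.exp (-z * Real.cosh u))/2) * hq2
  -- step D : combine
  have hD : besselK Q z = (∫ s in Ioi (0:ℝ), e1 s) / 2 := by
    have hIci : IntegrableOn e1 (Ici 1) := hint1.mono_set (fun x hx => mem_Ioi.2 (lt_of_lt_of_le one_pos (mem_Ici.1 hx)))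
    rw [hA]
    rw [integral_div, integral_add hIci hint2]
    rw [← hBint, integral_Ici_eq_integral_Ioi]
    have hsplit : ∫ s in Ioi (0:ℝ), e1 s =
        (∫ s in Ioc (0:ℝ) 1, e1 s) + ∫ s in Ioi (1:ℝ), e1 s := by
      rw [← setIntegral_union (Ioc_disjoint_Ioi le_rfl) measurableSet_Ioi
        (hint1.mono_set (fun x hx => hx.1)) (hint1.mono_set (fun x hx => mem_Ioi.2 (lt_trans one_pos (mem_Ioi.1 hx)))),
        Ioc_union_Ioi_eq_Ioi zero_le_one]
    rw [hsplit]
    ring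
  -- step E : scaling
  have hE : (z/2) ^ (Q-1) * ∫ s in Ioi (0:ℝ), e1 s = (z/2)⁻¹ * Gaux Q (z^2/4) := by
    have h := integral_comp_mul_left_Ioi
      (fun t => Real.exp (-t - (z^2/4)/t) * t ^ (Q - 1)) 0 hz2
    rw [mul_zero] at h
    simp only [smul_eq_mul] at h
    rw [Gaux, ← h, ← integral_const_mul]
    refine setIntegral_congr_fun measurableSet_Ioi (fun x hx => ?_)
    have hx0 : (0:ℝ) < x := hx
    simp only [he1, smul_eq_mul]
    rw [mul_pow]
    have harg : -(z/2*x) - z^2/4/(z/2*x) = -(z/2) * (x + x⁻¹) := by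
      field_simp
      ring
    rw [harg]
    ring
  -- finish
  have hQ' : (z/2) ^ Q = (z/2) * (z/2) ^ (Q-1) := by
    rw [← pow_succ']
    congr 1
    omega
  rw [hD, hQ']
  calc z/2 * (z/2)^(Q-1) * ((∫ s in Ioi (0:ℝ), e1 s)/2)
      = (z/2)/2 * ((z/2)^(Q-1) * ∫ s in Ioi (0:ℝ), e1 s) := by ring
    _ = (z/2)/2 * ((z/2)⁻¹ * Gaux Q (z^2/4)) := by rw [hE]
    _ = Gaux Q (z^2/4) / 2 := by
        have hc : (z/2)/2 * (z/2)⁻¹ = 1/2 := by field_simp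
        rw [← mul_assoc, hc]
        ring

/-- The map `x ↦ 1 − (2/Γ(Q))(cx)^(Q/2) K_Q(2√(cx))` is a genuine continuous
CDF on `(0,∞)`: strictly increasing, tending to `0` as `x → 0⁺` and to `1`
as `x → ∞`. -/
theorem cascaded_cdf_valid (Q : ℕ) (hQ : 1 ≤ Q) (c : ℝ) (hc : 0 < c)
    (F : ℝ → ℝ)
    (hF : ∀ x, F x = 1 - (2 / Real.Gamma Q) * (c * x) ^ ((Q : ℝ) / 2) *
      besselK (Q : ℝ) (2 * Real.sqrt (c * x))) :
    StrictMonoOn F (Set.Ioi 0) ∧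
    ContinuousOn F (Set.Ioi 0) ∧
    Tendsto F (nhdsWithin 0 (Set.Ioi 0)) (nhds 0) ∧
    Tendsto F atTop (nhds 1) := by
  have hΓ : 0 < Real.Gamma Q := Real.Gamma_pos_of_pos (by exact_mod_cast Nat.cast_pos.2 hQ)
  have hFeq : ∀ x ∈ Ioi (0:ℝ), F x = 1 - Gaux Q (c*x) / Real.Gamma Q := by
    intro x hx
    have hx0 : (0:ℝ) < x := hx
    have hcx : 0 < c * x := mul_pos hc hx0
    have hz : 0 < 2 * Real.sqrt (c * x) := by positivity
    have hz2 : (2 * Real.sqrt (c * x)) / 2 = Real.sqrt (c * x) := by ring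
    have hzsq : (2 * Real.sqrt (c * x))^2 / 4 = c * x := by
      rw [mul_pow, Real.sq_sqrt hcx.le]; ring
    have hpow : (c * x) ^ ((Q : ℝ) / 2) = (Real.sqrt (c * x)) ^ Q := by
      rw [Real.sqrt_eq_rpow, ← Real.rpow_natCast ((c*x) ^ ((1:ℝ)/2)) Q,
        ← Real.rpow_mul hcx.le]
      congr 1
      ring
    have hkey := besselK_key Q hQ hz
    rw [hz2, hzsq] at hkey
    rw [hF x, hpow, mul_assoc, hkey]
    field_simp
  have hmapsto : ∀ x ∈ Ioi (0:ℝ), 0 ≤ c * x := fun x hx => (mul_pos hc hx).le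
  refine ⟨?_, ?_, ?_, ?_⟩
  · intro a ha b hb hab
    rw [hFeq a ha, hFeq b hb]
    have h := Gaux_anti Q hQ (hmapsto a ha) (by exact mul_lt_mul_of_pos_left hab hc)
    have := div_lt_div_of_pos_right h hΓ
    linarith
  · have hcont : ContinuousOn (fun x => 1 - Gaux Q (c*x) / Real.Gamma Q) (Ioi 0) := by
      refine continuousOn_const.sub (ContinuousOn.div_const ?_ _)
      exact (Gaux_cont Q hQ).comp (Continuous.continuousOn (by fun_prop)) hmapsto
    exact ContinuousOn.congr hcont hFeq
  · have h1 : Tendsto (fun x : ℝ => c * x) (nhdsWithin 0 (Ioi 0)) (nhdsWithin 0 (Ici 0)) := by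
      refine tendsto_nhdsWithin_of_tendsto_nhds_of_eventually_within _ ?_ ?_
      · have : Tendsto (fun x : ℝ => c * x) (nhds 0) (nhds (c * 0)) :=
          (continuous_const.mul continuous_id).tendsto 0
        rw [mul_zero] at this
        exact this.mono_left nhdsWithin_le_nhds
      · filter_upwards [self_mem_nhdsWithin] with x hx using (mul_pos hc hx).le
    have h2 : Tendsto (Gaux Q) (nhdsWithin 0 (Ici 0)) (nhds (Real.Gamma Q)) := by
      have := (Gaux_cont Q hQ) 0 (self_mem_Ici)
      rw [ContinuousWithinAt, Gaux_zero Q hQ] at this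
      exact this
    have h3 : Tendsto (fun x => 1 - Gaux Q (c*x) / Real.Gamma Q)
        (nhdsWithin 0 (Ioi 0)) (nhds (1 - Real.Gamma Q / Real.Gamma Q)) :=
      tendsto_const_nhds.sub ((h2.comp h1).div_const _)
    rw [div_self hΓ.ne', sub_self] at h3
    refine Tendsto.congr' ?_ h3
    filter_upwards [self_mem_nhdsWithin] with x hx using (hFeq x hx).symm
  · have h1 : Tendsto (fun x : ℝ => c * x) atTop atTop :=
      Tendsto.const_mul_atTop hc tendsto_id
    have h3 : Tendsto (fun x => 1 - Gaux Q (c*x) / Real.Gamma Q) atTop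
        (nhds (1 - 0 / Real.Gamma Q)) :=
      tendsto_const_nhds.sub (((Gaux_tendsto_top Q hQ).comp h1).div_const _)
    rw [zero_div, sub_zero] at h3
    refine Tendsto.congr' ?_ h3
    filter_upwards [eventually_gt_atTop 0] with x hx using (hFeq x hx).symm
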